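/- Let k ≥ 1 and let J ∈ M_{2k}(ℝ) be the block matrix J = [[0, I_k], [−I_k, 0]]. Let Sp_k = { A ∈ GL_{2k}(ℝ) : Aᵀ J A = J } be the symplectic group, a subgroup of GL_{2k}(ℝ). Then an invertible matrix B ∈ GL_{2k}(ℝ) lies in the normalizer N(Sp_k) of Sp_k in GL_{2k}(ℝ) if and only if there exists a nonzero real number r with Bᵀ J B = r·J. -/

import Mathlib

open Matrix

/-- The standard symplectic matrix `J = [[0, I], [-I, 0]]`. -/
def symplJ (k : ℕ) : Matrix (Fin k ⊕ Fin k) (Fin k ⊕ Fin k) ℝ :=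
  Matrix.fromBlocks 0 1 (-1) 0

variable {k : ℕ}

lemma sJ_transpose : (symplJ k)ᵀ = -symplJ k := by
  ext (i|i) (j|j) <;> simp [symplJ, fromBlocks, Matrix.one_apply, eq_comm]

lemma sJ_mul_sJ : symplJ k * symplJ k = -1 := by
  simp only [symplJ, fromBlocks_multiply]
  ext (i|i) (j|j) <;> simp [fromBlocks, Matrix.one_apply]

lemma mul_vmv (A : Matrix (Fin k ⊕ Fin k) (Fin k ⊕ Fin k) ℝ) (a b : (Fin k ⊕ Fin k) → ℝ) :
    A * vecMulVec a b = vecMulVec (A.mulVec a) b := by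
  ext i j
  simp [mul_apply, vecMulVec_apply, mulVec, dotProduct, Finset.sum_mul, add_mul, mul_assoc]

lemma vmv_mul (A : Matrix (Fin k ⊕ Fin k) (Fin k ⊕ Fin k) ℝ) (a b : (Fin k ⊕ Fin k) → ℝ) :
    vecMulVec a b * A = vecMulVec a (vecMul b A) := by
  ext i j
  simp [mul_apply, vecMulVec_apply, vecMul, dotProduct, Finset.mul_sum, mul_add, mul_assoc]

lemma vecMul_vmv (a b c : (Fin k ⊕ Fin k) → ℝ) :
    vecMul a (vecMulVec b c) = (a ⬝ᵥ b) • c := by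
  ext j
  simp [vecMul, vecMulVec_apply, dotProduct, Finset.sum_mul, add_mul, mul_assoc]

lemma vmv_transpose (a b : (Fin k ⊕ Fin k) → ℝ) :
    (vecMulVec a b)ᵀ = vecMulVec b a := by
  ext i j; simp [vecMulVec_apply, mul_comm]

def Pmat (k : ℕ) (v : (Fin k ⊕ Fin k) → ℝ) : Matrix (Fin k ⊕ Fin k) (Fin k ⊕ Fin k) ℝ :=
  vecMulVec v (vecMul v (symplJ k))

lemma sJ_mulVec (v : (Fin k ⊕ Fin k) → ℝ) :
    (symplJ k).mulVec v = -(vecMul v (symplJ k)) := by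
  have h : vecMul v (symplJ k) = (symplJ k)ᵀ.mulVec v := (mulVec_transpose _ v).symm
  rw [h, sJ_transpose, neg_mulVec, neg_neg]

lemma w_dot_v (v : (Fin k ⊕ Fin k) → ℝ) : (vecMul v (symplJ k)) ⬝ᵥ v = 0 := by
  have h1 : vecMul v (symplJ k) ⬝ᵥ v = v ⬝ᵥ (symplJ k).mulVec v :=
    (dotProduct_mulVec v _ v).symm
  rw [sJ_mulVec, dotProduct_neg, dotProduct_comm] at h1
  rw [dotProduct_comm]
  linarith

lemma P_mul_P (v : (Fin k ⊕ Fin k) → ℝ) : Pmat k v * Pmat k v = 0 := by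
  unfold Pmat
  rw [vmv_mul, vecMul_vmv, w_dot_v, zero_smul]
  ext i j; simp [vecMulVec_apply]

lemma PT_J (v : (Fin k ⊕ Fin k) → ℝ) :
    (Pmat k v)ᵀ * symplJ k = vecMulVec (vecMul v (symplJ k)) (vecMul v (symplJ k)) := by
  unfold Pmat
  rw [vmv_transpose, vmv_mul]

lemma J_P (v : (Fin k ⊕ Fin k) → ℝ) :
    symplJ k * Pmat k v = -vecMulVec (vecMul v (symplJ k)) (vecMul v (symplJ k)) := by
  unfold Pmat
  rw [mul_vmv, sJ_mulVec]
  ext i j; simp [vecMulVec_apply]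

lemma PT_J_P (v : (Fin k ⊕ Fin k) → ℝ) :
    (Pmat k v)ᵀ * symplJ k * Pmat k v = 0 := by
  rw [PT_J]
  unfold Pmat
  rw [vmv_mul, vecMul_vmv, w_dot_v, zero_smul]
  ext i j; simp [vecMulVec_apply]

lemma T_mul_T' (v : (Fin k ⊕ Fin k) → ℝ) (c : ℝ) :
    (1 + c • Pmat k v) * (1 - c • Pmat k v) = 1 := by
  have h := P_mul_P v
  simp [mul_sub, add_mul, Matrix.smul_mul, Matrix.mul_smul, smul_smul, h]

lemma T'_mul_T (v : (Fin k ⊕ Fin k) → ℝ) (c : ℝ) :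
    (1 - c • Pmat k v) * (1 + c • Pmat k v) = 1 := by
  have h := P_mul_P v
  simp [sub_mul, mul_add, Matrix.smul_mul, Matrix.mul_smul, smul_smul, h]

lemma T_symp (v : (Fin k ⊕ Fin k) → ℝ) (c : ℝ) :
    (1 + c • Pmat k v)ᵀ * symplJ k * (1 + c • Pmat k v) = symplJ k := by
  simp only [transpose_add, transpose_one, transpose_smul, add_mul, mul_add, one_mul,
    mul_one, Matrix.smul_mul, Matrix.mul_smul, smul_smul]
  rw [PT_J, J_P]
  have h3 := PT_J_P v
  rw [PT_J] at h3
  rw [h3]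
  simp


lemma J_inl_inr (p q : Fin k) : symplJ k (Sum.inl p) (Sum.inr q) = if p = q then 1 else 0 := by
  simp [symplJ, fromBlocks, Matrix.one_apply]

lemma J_inr_inl (p q : Fin k) : symplJ k (Sum.inr p) (Sum.inl q) = -(if p = q then 1 else 0) := by
  simp [symplJ, fromBlocks, Matrix.one_apply]

lemma J_inl_inl (p q : Fin k) : symplJ k (Sum.inl p) (Sum.inl q) = 0 := by
  simp [symplJ, fromBlocks]

lemma J_inr_inr (p q : Fin k) : symplJ k (Sum.inr p) (Sum.inr q) = 0 := by
  simp [symplJ, fromBlocks]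

lemma unconj (Bm Bi M : Matrix (Fin k ⊕ Fin k) (Fin k ⊕ Fin k) ℝ) (h : Bi * Bm = 1) :
    Bmᵀ * (Biᵀ * M * Bi) * Bm = M := by
  have h2 : Bmᵀ * (Biᵀ * M * Bi) * Bm = (Bi * Bm)ᵀ * M * (Bi * Bm) := by
    simp only [transpose_mul]; noncomm_ring
  rw [h2, h]; simp

lemma conj_conj (X Y Z W : Matrix (Fin k ⊕ Fin k) (Fin k ⊕ Fin k) ℝ) :
    (X * Y * Z)ᵀ * W * (X * Y * Z) = Zᵀ * (Yᵀ * (Xᵀ * W * X) * Y) * Z := by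
  simp only [transpose_mul]; noncomm_ring

lemma T_K_T (K P : Matrix (Fin k ⊕ Fin k) (Fin k ⊕ Fin k) ℝ) (c : ℝ) :
    (1 + c • P)ᵀ * K * (1 + c • P)
      = K + c • (Pᵀ * K) + c • (K * P) + (c * c) • (Pᵀ * (K * P)) := by
  simp only [transpose_add, transpose_one, transpose_smul, add_mul, mul_add, one_mul,
    mul_one, Matrix.smul_mul, Matrix.mul_smul, smul_smul, mul_assoc]
  abel


/-- The symplectic group `Sp_k = { A ∈ GL_{2k}(ℝ) : Aᵀ J A = J }` as a subgroup
of `GL_{2k}(ℝ)`. -/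
def SpGroup (k : ℕ) : Subgroup (GL (Fin k ⊕ Fin k) ℝ) where
  carrier := {A | (A : Matrix (Fin k ⊕ Fin k) (Fin k ⊕ Fin k) ℝ)ᵀ * symplJ k *
    (A : Matrix (Fin k ⊕ Fin k) (Fin k ⊕ Fin k) ℝ) = symplJ k}
  one_mem' := by simp
  mul_mem' := by
    intro a b ha hb
    simp only [Set.mem_setOf_eq] at *
    set M := (a : Matrix (Fin k ⊕ Fin k) (Fin k ⊕ Fin k) ℝ)
    set N := (b : Matrix (Fin k ⊕ Fin k) (Fin k ⊕ Fin k) ℝ)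
    have : ((a * b : GL (Fin k ⊕ Fin k) ℝ) : Matrix (Fin k ⊕ Fin k) (Fin k ⊕ Fin k) ℝ)
        = M * N := rfl
    rw [this, Matrix.transpose_mul]
    calc Nᵀ * Mᵀ * symplJ k * (M * N) = Nᵀ * (Mᵀ * symplJ k * M) * N := by noncomm_ring
      _ = Nᵀ * symplJ k * N := by rw [ha]
      _ = symplJ k := hb
  inv_mem' := by
    intro a ha
    simp only [Set.mem_setOf_eq] at *
    set M := (a : Matrix (Fin k ⊕ Fin k) (Fin k ⊕ Fin k) ℝ)
    set N := ((a⁻¹ : GL (Fin k ⊕ Fin k) ℝ) : Matrix (Fin k ⊕ Fin k) (Fin k ⊕ Fin k) ℝ)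
    have hMN : M * N = 1 := a.mul_inv
    have h1 : Nᵀ * (Mᵀ * symplJ k * M) * N = (M * N)ᵀ * symplJ k * (M * N) := by
      rw [Matrix.transpose_mul]; noncomm_ring
    rw [ha, hMN] at h1
    simpa using h1

lemma mem_Sp {A : GL (Fin k ⊕ Fin k) ℝ} :
    A ∈ SpGroup k ↔ (A : Matrix (Fin k ⊕ Fin k) (Fin k ⊕ Fin k) ℝ)ᵀ * symplJ k *
      (A : Matrix (Fin k ⊕ Fin k) (Fin k ⊕ Fin k) ℝ) = symplJ k := Iff.rfl

def Tunit (k : ℕ) (v : (Fin k ⊕ Fin k) → ℝ) (c : ℝ) : GL (Fin k ⊕ Fin k) ℝ :=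
  ⟨1 + c • Pmat k v, 1 - c • Pmat k v, T_mul_T' v c, T'_mul_T v c⟩

lemma Tunit_mem (v : (Fin k ⊕ Fin k) → ℝ) (c : ℝ) : Tunit k v c ∈ SpGroup k :=
  T_symp v c

set_option maxHeartbeats 1000000 in
/-- Characterization of the normalizer of the symplectic group (paper's Lemma
5.2, after Sirola): `B ∈ N(Sp_k)` iff `Bᵀ J B = r·J` for some nonzero real `r`. -/
theorem mem_normalizer_sp_iff (k : ℕ) (hk : 1 ≤ k) (B : GL (Fin k ⊕ Fin k) ℝ) :
    B ∈ Subgroup.normalizer (SpGroup k : Set (GL (Fin k ⊕ Fin k) ℝ)) ↔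
      ∃ r : ℝ, r ≠ 0 ∧
        (B : Matrix (Fin k ⊕ Fin k) (Fin k ⊕ Fin k) ℝ)ᵀ * symplJ k *
          (B : Matrix (Fin k ⊕ Fin k) (Fin k ⊕ Fin k) ℝ) = r • symplJ k := by
  set Bm := (B : Matrix (Fin k ⊕ Fin k) (Fin k ⊕ Fin k) ℝ) with hBm
  set Bi := ((B⁻¹ : GL (Fin k ⊕ Fin k) ℝ) : Matrix (Fin k ⊕ Fin k) (Fin k ⊕ Fin k) ℝ) with hBi
  have hBiBm : Bi * Bm = 1 := B.inv_mul
  have hBmBi : Bm * Bi = 1 := B.mul_inv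
  constructor
  · intro hB
    set K := Bmᵀ * symplJ k * Bm with hKdef
    -- step 1: conjugation invariance for transvections
    have hKT : ∀ (v : (Fin k ⊕ Fin k) → ℝ) (c : ℝ),
        (1 + c • Pmat k v)ᵀ * K * (1 + c • Pmat k v) = K := by
      intro v c
      have h1 := (Subgroup.mem_normalizer_iff.mp hB (Tunit k v c)).mp (Tunit_mem v c)
      have h2 : (Bm * (1 + c • Pmat k v) * Bi)ᵀ * symplJ k *
          (Bm * (1 + c • Pmat k v) * Bi) = symplJ k := h1
      rw [conj_conj] at h2
      have h3 := congrArg (fun M => Bmᵀ * M * Bm) h2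
      rwa [unconj _ _ _ hBiBm] at h3
    -- step 2: anti-commutation relation
    have hX : ∀ v : (Fin k ⊕ Fin k) → ℝ, (Pmat k v)ᵀ * K + K * Pmat k v = 0 := by
      intro v
      set P := Pmat k v
      have e1 := hKT v 1
      have e2 := hKT v (-1)
      rw [T_K_T] at e1 e2
      simp only [one_smul, one_mul, neg_smul, neg_mul, neg_neg] at e1 e2
      -- e1 : K + Pᵀ*K + K*P + Pᵀ*(K*P) = K
      -- e2 : K + -(Pᵀ*K) + -(K*P) + Pᵀ*(K*P) = K
      have f1 : (Pᵀ * K + K * P) + Pᵀ * (K * P) = 0 := by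
        calc (Pᵀ * K + K * P) + Pᵀ * (K * P)
            = (K + Pᵀ * K + K * P + Pᵀ * (K * P)) - K := by abel
          _ = 0 := by rw [e1]; simp
      have f2 : -(Pᵀ * K + K * P) + Pᵀ * (K * P) = 0 := by
        calc -(Pᵀ * K + K * P) + Pᵀ * (K * P)
            = (K + -(Pᵀ * K) + -(K * P) + Pᵀ * (K * P)) - K := by abel
          _ = 0 := by rw [e2]; simp
      have h2X : (2 : ℝ) • (Pᵀ * K + K * P) = 0 := by
        rw [two_smul]
        calc (Pᵀ * K + K * P) + (Pᵀ * K + K * P)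
            = ((Pᵀ * K + K * P) + Pᵀ * (K * P)) - (-(Pᵀ * K + K * P) + Pᵀ * (K * P)) := by abel
          _ = 0 := by rw [f1, f2]; simp
      rcases smul_eq_zero.mp h2X with h | h
      · norm_num at h
      · exact h
    -- step 3: entrywise relation
    have hE : ∀ (v : (Fin k ⊕ Fin k) → ℝ) (a b : Fin k ⊕ Fin k),
        (vecMul v (symplJ k)) a * (vecMul v K) b + (K.mulVec v) a * (vecMul v (symplJ k)) b = 0 := by
      intro v a b
      have h := hX v
      unfold Pmat at h
      rw [vmv_transpose, vmv_mul, mul_vmv] at h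
      have h2 := congrFun (congrFun h a) b
      simpa [Matrix.add_apply, vecMulVec_apply] using h2
    have hsingle : ∀ (i a b : Fin k ⊕ Fin k),
        symplJ k i a * K i b + K a i * symplJ k i b = 0 := by
      intro i a b
      have h := hE (Pi.single i 1) a b
      simpa [Matrix.single_vecMul, Matrix.mulVec_single] using h
    -- entry structure of K
    have hK1 : ∀ (q : Fin k) (a : Fin k ⊕ Fin k), a ≠ Sum.inr q → K a (Sum.inl q) = 0 := by
      intro q a ha
      have h := hsingle (Sum.inl q) a (Sum.inr q)
      rw [J_inl_inr] at h
      simp only [if_pos rfl, mul_one] at h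
      have hJa : symplJ k (Sum.inl q) a = 0 := by
        cases a with
        | inl p => exact J_inl_inl q p
        | inr p =>
          rw [J_inl_inr]
          simp only [ite_eq_right_iff]
          intro hqp; exact absurd (by rw [hqp]) ha
      rw [hJa, zero_mul, zero_add] at h
      simpa using h
    have hK3 : ∀ (q : Fin k) (a : Fin k ⊕ Fin k), a ≠ Sum.inl q → K a (Sum.inr q) = 0 := by
      intro q a ha
      have h := hsingle (Sum.inr q) a (Sum.inl q)
      rw [J_inr_inl] at h
      simp only [if_pos rfl] at h
      have hJa : symplJ k (Sum.inr q) a = 0 := by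
        cases a with
        | inl p =>
          rw [J_inr_inl]
          simp only [neg_eq_zero, ite_eq_right_iff]
          intro hqp; exact absurd (by rw [hqp]) ha
        | inr p => exact J_inr_inr q p
      rw [hJa, zero_mul, zero_add] at h
      simpa using h
    have hK2 : ∀ q : Fin k, K (Sum.inr q) (Sum.inl q) = -K (Sum.inl q) (Sum.inr q) := by
      intro q
      have h := hsingle (Sum.inl q) (Sum.inr q) (Sum.inr q)
      rw [J_inl_inr] at h
      simp only [if_pos rfl, mul_one, one_mul] at h
      simp at h
      linarith
    -- equality of diagonal values
    have hd : ∀ p q : Fin k, K (Sum.inl p) (Sum.inr p) = K (Sum.inl q) (Sum.inr q) := by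
      intro p q
      by_cases hpq : p = q
      · rw [hpq]
      have h := hE (Pi.single (Sum.inl p) 1 + Pi.single (Sum.inl q) 1) (Sum.inr p) (Sum.inr q)
      rw [add_vecMul, add_vecMul, mulVec_add] at h
      simp only [Matrix.single_vecMul, Matrix.mulVec_single, one_mul, mul_one, Pi.add_apply,
        Pi.smul_apply, MulOpposite.op_one, one_smul, Matrix.row_apply, Matrix.col_apply] at h
      have h1 := hK1 q (Sum.inr p) (by simp [hpq])
      have h2 := hK3 q (Sum.inl p) (by simp [hpq])
      rw [h1, h2, hK2 p] at h
      simp [J_inl_inr, J_inr_inr, hpq, Ne.symm hpq] at h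
      linarith
    -- conclude K = r • J
    set p0 : Fin k := ⟨0, hk⟩
    have hKJ : K = K (Sum.inl p0) (Sum.inr p0) • symplJ k := by
      ext a b
      match a, b with
      | Sum.inl a, Sum.inl b =>
        rw [hK1 b (Sum.inl a) (by simp)]; simp [J_inl_inl]
      | Sum.inl a, Sum.inr b =>
        by_cases hab : a = b
        · subst hab
          rw [hd a p0]
          simp [J_inl_inr, Matrix.smul_apply]
        · rw [hK3 b (Sum.inl a) (by simp [hab])]
          simp [J_inl_inr, hab, Matrix.smul_apply]
      | Sum.inr a, Sum.inl b =>
        by_cases hab : a = b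
        · subst hab
          rw [hK2 a, hd a p0]
          simp [J_inr_inl, Matrix.smul_apply]
        · rw [hK1 b (Sum.inr a) (by simp [hab])]
          simp [J_inr_inl, hab, Matrix.smul_apply]
      | Sum.inr a, Sum.inr b =>
        rw [hK3 b (Sum.inr a) (by simp)]; simp [J_inr_inr]
    have hrne : K (Sum.inl p0) (Sum.inr p0) ≠ 0 := by
      intro h0
      have hK0 : K = 0 := by rw [hKJ, h0, zero_smul]
      have h2 := unconj Bi Bm (symplJ k) hBmBi
      rw [← hKdef, hK0] at h2
      have h3 := congrFun (congrFun h2.symm (Sum.inl p0)) (Sum.inr p0)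
      simp [J_inl_inr] at h3
    exact ⟨_, hrne, hKJ⟩
  · rintro ⟨r, hr, hK⟩
    rw [Subgroup.mem_normalizer_iff]
    intro A
    have hBiJ : Biᵀ * symplJ k * Bi = r⁻¹ • symplJ k := by
      have h2 := unconj Bi Bm (symplJ k) hBmBi
      rw [hK, Matrix.mul_smul, Matrix.smul_mul] at h2
      calc Biᵀ * symplJ k * Bi = r⁻¹ • (r • (Biᵀ * symplJ k * Bi)) := by
            rw [smul_smul, inv_mul_cancel₀ hr, one_smul]
        _ = r⁻¹ • symplJ k := by rw [h2]
    have hcoe : ((B * A * B⁻¹ : GL (Fin k ⊕ Fin k) ℝ) :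
        Matrix (Fin k ⊕ Fin k) (Fin k ⊕ Fin k) ℝ) = Bm * (A : Matrix _ _ ℝ) * Bi := rfl
    constructor
    · intro hA
      have hA' : (A : Matrix (Fin k ⊕ Fin k) (Fin k ⊕ Fin k) ℝ)ᵀ * symplJ k *
          (A : Matrix (Fin k ⊕ Fin k) (Fin k ⊕ Fin k) ℝ) = symplJ k := hA
      rw [mem_Sp, hcoe]
      set Am := (A : Matrix (Fin k ⊕ Fin k) (Fin k ⊕ Fin k) ℝ)
      calc (Bm * Am * Bi)ᵀ * symplJ k * (Bm * Am * Bi)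
          = Biᵀ * (Amᵀ * (Bmᵀ * symplJ k * Bm) * Am) * Bi := conj_conj _ _ _ _
        _ = Biᵀ * (Amᵀ * (r • symplJ k) * Am) * Bi := by rw [hK]
        _ = r • (Biᵀ * (Amᵀ * symplJ k * Am) * Bi) := by
            simp [Matrix.mul_smul, Matrix.smul_mul]
        _ = r • (Biᵀ * symplJ k * Bi) := by rw [hA']
        _ = symplJ k := by rw [hBiJ, smul_smul, mul_inv_cancel₀ hr, one_smul]
    · intro hC
      rw [mem_Sp, hcoe] at hC
      rw [mem_Sp]
      set Am := (A : Matrix (Fin k ⊕ Fin k) (Fin k ⊕ Fin k) ℝ)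
      have key : r • (Amᵀ * symplJ k * Am) = r • symplJ k := by
        calc r • (Amᵀ * symplJ k * Am)
            = Amᵀ * (r • symplJ k) * Am := by simp [Matrix.mul_smul, Matrix.smul_mul]
          _ = Amᵀ * (Bmᵀ * symplJ k * Bm) * Am := by rw [hK]
          _ = Bmᵀ * (Biᵀ * (Amᵀ * (Bmᵀ * symplJ k * Bm) * Am) * Bi) * Bm :=
              (unconj Bm Bi _ hBiBm).symm
          _ = Bmᵀ * ((Bm * Am * Bi)ᵀ * symplJ k * (Bm * Am * Bi)) * Bm := by rw [conj_conj]
          _ = Bmᵀ * symplJ k * Bm := by rw [hC]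
          _ = r • symplJ k := hK
      exact smul_right_injective _ hr key
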